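/- Let σ be an abundant skew shape with height a and width b, i.e., a connected skew shape each of whose northwest corners occurs on or above its main anti-diagonal and each of whose southeast corners occurs on or below it (equivalently, δ(c) ≥ 0 for all c ∈ C(σ)). Then for every toggle-symmetric probability distribution μ on J(σ), the expected jaggedness of a μ-random subshape is at least 2ab/(a+b). -/

import Mathlib

open Finset
open scoped Classical

noncomputable section

/-- A skew Young diagram `λ/ν` (in English notation) with height `a` and width `b`.
Rows are indexed `1,…,a` from top to bottom and columns `1,…,b` from left to right;
row `i` consists of the boxes in columns `ν i + 1, …, λ i` (each row is nonempty).
Box `[i,j]` has its southeast corner at the lattice point `(i,j)`, the point `(0,0)`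
being the northwest corner of the bounding `a × b` rectangle. -/
structure SkewShape where
  a : ℕ
  b : ℕ
  ha : 1 ≤ a
  hb : 1 ≤ b
  lam : ℕ → ℕ
  nu : ℕ → ℕ
  lam_anti : ∀ i j : ℕ, 1 ≤ i → i ≤ j → j ≤ a → lam j ≤ lam i
  nu_anti : ∀ i j : ℕ, 1 ≤ i → i ≤ j → j ≤ a → nu j ≤ nu i
  nu_lt_lam : ∀ i : ℕ, 1 ≤ i → i ≤ a → nu i < lam i
  lam_le_b : ∀ i : ℕ, 1 ≤ i → i ≤ a → lam i ≤ b
  lam_one : lam 1 = b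
  nu_a : nu a = 0

namespace SkewShape

variable (σ : SkewShape)

/-- The boxes of `σ` : pairs `[i,j]` with `1 ≤ i ≤ a` and `ν i < j ≤ λ i`.
The poset `P_σ` is the set of boxes ordered componentwise:
`[i,j] ≤ [k,l]` iff `i ≤ k` and `j ≤ l` (the product order on `ℕ × ℕ`). -/
def cells : Finset (ℕ × ℕ) :=
  (Finset.Icc 1 σ.a ×ˢ Finset.Icc 1 σ.b).filter
    (fun c => σ.nu c.1 < c.2 ∧ c.2 ≤ σ.lam c.1)

/-- The poset `P_σ` of boxes of `σ` is connected: it is nonempty, and any two boxes are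
joined by a walk along comparable pairs of boxes. -/
def Connected : Prop :=
  σ.cells.Nonempty ∧ ∀ p ∈ σ.cells, ∀ q ∈ σ.cells,
    Relation.ReflTransGen
      (fun x y : ℕ × ℕ => x ∈ σ.cells ∧ y ∈ σ.cells ∧ (x ≤ y ∨ y ≤ x)) p q

/-- `I` is an order ideal of `P_σ`, i.e. a subshape of `σ`. -/
def IsIdeal (I : Finset (ℕ × ℕ)) : Prop :=
  I ⊆ σ.cells ∧ ∀ p ∈ I, ∀ q ∈ σ.cells, q ≤ p → q ∈ I

/-- The set `J(σ)` of all order ideals of `P_σ` (equivalently, subshapes of `σ`). -/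
def idealsFinset : Finset (Finset (ℕ × ℕ)) :=
  σ.cells.powerset.filter fun I => σ.IsIdeal I

/-- Box `p` can be toggled in to the order ideal `I`. -/
def CanToggleIn (I : Finset (ℕ × ℕ)) (p : ℕ × ℕ) : Prop :=
  p ∈ σ.cells ∧ p ∉ I ∧ σ.IsIdeal (insert p I)

/-- Box `p` can be toggled out of the order ideal `I`. -/
def CanToggleOut (I : Finset (ℕ × ℕ)) (p : ℕ × ℕ) : Prop :=
  p ∈ I ∧ σ.IsIdeal (I.erase p)

/-- The jaggedness of `I`: the number of boxes that can be toggled in,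
plus the number of boxes that can be toggled out. -/
def jag (I : Finset (ℕ × ℕ)) : ℕ :=
  (σ.cells.filter fun p => σ.CanToggleIn I p).card +
  (σ.cells.filter fun p => σ.CanToggleOut I p).card

/-- The probability, under `μ`, that a random order ideal of `P_σ` satisfies `E`. -/
def pr (μ : Finset (ℕ × ℕ) → ℝ) (E : Finset (ℕ × ℕ) → Prop) : ℝ :=
  ∑ I ∈ σ.idealsFinset.filter E, μ I

/-- `μ` is a probability distribution on `J(σ)`. -/
def IsProbDist (μ : Finset (ℕ × ℕ) → ℝ) : Prop :=
  (∀ I, 0 ≤ μ I) ∧ (∑ I ∈ σ.idealsFinset, μ I = 1)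

/-- `μ` is toggle-symmetric: for every box `p` of `σ`, the probability that `p` can be
toggled in equals the probability that `p` can be toggled out. -/
def ToggleSymmetric (μ : Finset (ℕ × ℕ) → ℝ) : Prop :=
  ∀ p ∈ σ.cells,
    σ.pr μ (fun I => σ.CanToggleIn I p) = σ.pr μ (fun I => σ.CanToggleOut I p)

/-- The expectation of the statistic `f` with respect to `μ`. -/
def expect (μ : Finset (ℕ × ℕ) → ℝ) (f : Finset (ℕ × ℕ) → ℝ) : ℝ :=
  ∑ I ∈ σ.idealsFinset, μ I * f I

/-- `c` is a northwest outward corner of `σ`, occurring at the lattice point `c = (i,j)`: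
the northwest boundary of `σ` turns at `(i,j)` with its two steps
(the top edge of box `[i+1,j]` and the left edge of box `[i,j+1]`)
not bordering a common box of `σ`. -/
def IsNWCorner (c : ℕ × ℕ) : Prop :=
  (c.1 + 1, c.2) ∈ σ.cells ∧ (c.1, c.2 + 1) ∈ σ.cells ∧ (c.1, c.2) ∉ σ.cells

/-- `c` is a southeast outward corner of `σ`, occurring at the lattice point `c = (i,j)`:
the southeast boundary of `σ` turns at `(i,j)` with its two steps
(the right edge of box `[i+1,j]` and the bottom edge of box `[i,j+1]`)
not bordering a common box of `σ`. -/
def IsSECorner (c : ℕ × ℕ) : Prop :=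
  (c.1 + 1, c.2) ∈ σ.cells ∧ (c.1, c.2 + 1) ∈ σ.cells ∧ (c.1 + 1, c.2 + 1) ∉ σ.cells

/-- The set of northwest outward corners of `σ`. -/
def nwCorners : Finset (ℕ × ℕ) :=
  (Finset.range (σ.a + 1) ×ˢ Finset.range (σ.b + 1)).filter fun c => σ.IsNWCorner c

/-- The set of southeast outward corners of `σ`.
(Together, `nwCorners` and `seCorners` form the set `C(σ)` of outward corners.) -/
def seCorners : Finset (ℕ × ℕ) :=
  (Finset.range (σ.a + 1) ×ˢ Finset.range (σ.b + 1)).filter fun c => σ.IsSECorner c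

/-- The displacement `δ(c) = 1 − i/a − j/b` of a northwest corner occurring at `(i,j)`. -/
def nwDisp (c : ℕ × ℕ) : ℝ := 1 - (c.1 : ℝ) / (σ.a : ℝ) - (c.2 : ℝ) / (σ.b : ℝ)

/-- The displacement `δ(c) = −1 + i/a + j/b` of a southeast corner occurring at `(i,j)`. -/
def seDisp (c : ℕ × ℕ) : ℝ := -1 + (c.1 : ℝ) / (σ.a : ℝ) + (c.2 : ℝ) / (σ.b : ℝ)

/-- The lattice path of the subshape `I` includes both steps of the northwest corner at
`c = (i,j)`: neither box `[i+1,j]` nor box `[i,j+1]` belongs to `I`. -/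
def NWInPath (c : ℕ × ℕ) (I : Finset (ℕ × ℕ)) : Prop :=
  (c.1 + 1, c.2) ∉ I ∧ (c.1, c.2 + 1) ∉ I

/-- The lattice path of the subshape `I` includes both steps of the southeast corner at
`c = (i,j)`: both boxes `[i+1,j]` and `[i,j+1]` belong to `I`. -/
def SEInPath (c : ℕ × ℕ) (I : Finset (ℕ × ℕ)) : Prop :=
  (c.1 + 1, c.2) ∈ I ∧ (c.1, c.2 + 1) ∈ I

/-- The correction term `Σ_{c ∈ C(σ)} δ(c) · P_μ(c)`, where `P_μ(c)` is the
`μ`-probability that the lattice path of a random subshape includes both steps of `c`. -/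
def cornerCorrection (μ : Finset (ℕ × ℕ) → ℝ) : ℝ :=
  (∑ c ∈ σ.nwCorners, σ.nwDisp c * σ.pr μ (NWInPath c)) +
  (∑ c ∈ σ.seCorners, σ.seDisp c * σ.pr μ (SEInPath c))

end SkewShape

namespace SkewShape

variable (σ : SkewShape)

/-- `σ` is balanced: connected, with every outward corner of displacement `0`
(i.e. occurring on the main anti-diagonal from `(a,0)` to `(0,b)`). -/
def Balanced : Prop :=
  σ.Connected ∧ (∀ c ∈ σ.nwCorners, σ.nwDisp c = 0) ∧ ∀ c ∈ σ.seCorners, σ.seDisp c = 0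

/-- `σ` is abundant: connected, with every outward corner of displacement `≥ 0`. -/
def Abundant : Prop :=
  σ.Connected ∧ (∀ c ∈ σ.nwCorners, 0 ≤ σ.nwDisp c) ∧ ∀ c ∈ σ.seCorners, 0 ≤ σ.seDisp c

/-- `σ` is deficient: connected, with every outward corner of displacement `≤ 0`. -/
def Deficient : Prop :=
  σ.Connected ∧ (∀ c ∈ σ.nwCorners, σ.nwDisp c ≤ 0) ∧ ∀ c ∈ σ.seCorners, σ.seDisp c ≤ 0

end SkewShape
namespace SkewShape

variable (σ : SkewShape)

lemma mem_cells_iff (p : ℕ × ℕ) :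
    p ∈ σ.cells ↔ 1 ≤ p.1 ∧ p.1 ≤ σ.a ∧ σ.nu p.1 < p.2 ∧ p.2 ≤ σ.lam p.1 := by
  unfold cells
  simp only [Finset.mem_filter, Finset.mem_product, Finset.mem_Icc]
  constructor
  · rintro ⟨⟨⟨h1, h2⟩, _, _⟩, h5, h6⟩
    exact ⟨h1, h2, h5, h6⟩
  · rintro ⟨h1, h2, h3, h4⟩
    exact ⟨⟨⟨h1, h2⟩, by omega, h4.trans (σ.lam_le_b _ h1 h2)⟩, h3, h4⟩

/-- The row profile of a subshape: rightmost column of row `i` in `I` (or `ν i` if the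
row is empty in `I`), with conventions `r 0 = b` and `r i = 0` for `i > a`. -/
def rfn (I : Finset (ℕ × ℕ)) (i : ℕ) : ℕ :=
  if i = 0 then σ.b
  else if i ≤ σ.a then max (σ.nu i) ((I.filter fun c => c.1 = i).sup Prod.snd) else 0

lemma rfn_zero (I : Finset (ℕ × ℕ)) : σ.rfn I 0 = σ.b := by simp [rfn]

lemma rfn_of_gt (I : Finset (ℕ × ℕ)) {i : ℕ} (h : σ.a < i) : σ.rfn I i = 0 := by
  unfold rfn
  rw [if_neg (by omega), if_neg (by omega)]

lemma nu_le_rfn (I : Finset (ℕ × ℕ)) {i : ℕ} (h1 : 1 ≤ i) (h2 : i ≤ σ.a) :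
    σ.nu i ≤ σ.rfn I i := by
  unfold rfn
  rw [if_neg (by omega), if_pos h2]
  exact le_max_left _ _

variable {I : Finset (ℕ × ℕ)}

lemma mem_iff (hI : σ.IsIdeal I) (p : ℕ × ℕ) :
    p ∈ I ↔ 1 ≤ p.1 ∧ p.1 ≤ σ.a ∧ σ.nu p.1 < p.2 ∧ p.2 ≤ σ.rfn I p.1 := by
  constructor
  · intro hp
    have hc := (σ.mem_cells_iff p).mp (hI.1 hp)
    obtain ⟨h1, h2, h3, _⟩ := hc
    refine ⟨h1, h2, h3, ?_⟩
    have hs : p.2 ≤ (I.filter fun c => c.1 = p.1).sup Prod.snd :=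
      Finset.le_sup (f := Prod.snd) (Finset.mem_filter.mpr ⟨hp, rfl⟩)
    unfold rfn
    rw [if_neg (by omega), if_pos h2]
    exact le_max_of_le_right hs
  · rintro ⟨h1, h2, h3, h4⟩
    unfold rfn at h4
    rw [if_neg (by omega), if_pos h2] at h4
    rcases le_max_iff.mp h4 with h | h
    · omega
    · obtain ⟨c, hc, hle⟩ := (Finset.le_sup_iff (show (0:ℕ) < p.2 by omega)).mp h
      obtain ⟨hcI, hc1⟩ := Finset.mem_filter.mp hc
      have hccell := (σ.mem_cells_iff c).mp (hI.1 hcI)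
      have hpc : p ∈ σ.cells := by
        rw [σ.mem_cells_iff]
        refine ⟨h1, h2, h3, hle.trans ?_⟩
        rw [hc1] at hccell
        exact hccell.2.2.2
      exact hI.2 c hcI p hpc (Prod.le_def.mpr ⟨by omega, hle⟩)

lemma rfn_le_lam (hI : σ.IsIdeal I) {i : ℕ} (h1 : 1 ≤ i) (h2 : i ≤ σ.a) :
    σ.rfn I i ≤ σ.lam i := by
  unfold rfn
  rw [if_neg (by omega), if_pos h2]
  refine max_le (le_of_lt (σ.nu_lt_lam i h1 h2)) (Finset.sup_le ?_)
  intro c hc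
  obtain ⟨hcI, hc1⟩ := Finset.mem_filter.mp hc
  have hccell := (σ.mem_cells_iff c).mp (hI.1 hcI)
  rw [hc1] at hccell
  exact hccell.2.2.2

lemma rfn_succ_le (hI : σ.IsIdeal I) (i : ℕ) : σ.rfn I (i + 1) ≤ σ.rfn I i := by
  rcases Nat.eq_zero_or_pos i with rfl | hi
  · rw [σ.rfn_zero]
    exact (σ.rfn_le_lam hI le_rfl σ.ha).trans (le_of_eq σ.lam_one)
  rcases le_or_gt σ.a i with hai | hia
  · rw [σ.rfn_of_gt I (by omega)]
    exact Nat.zero_le _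
  -- 1 ≤ i < a
  by_cases hm : σ.rfn I (i + 1) ≤ σ.nu i
  · exact hm.trans (σ.nu_le_rfn I hi (le_of_lt hia))
  push_neg at hm
  have hmem : ((i + 1, σ.rfn I (i + 1)) : ℕ × ℕ) ∈ I := by
    rw [σ.mem_iff hI]
    refine ⟨by omega, by omega, ?_, le_rfl⟩
    show σ.nu (i + 1) < σ.rfn I (i + 1)
    have := σ.nu_anti i (i + 1) hi (by omega) (by omega)
    omega
  have hcell : ((i, σ.rfn I (i + 1)) : ℕ × ℕ) ∈ σ.cells := by
    rw [σ.mem_cells_iff]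
    refine ⟨hi, le_of_lt hia, hm, ?_⟩
    exact (σ.rfn_le_lam hI (by omega) (by omega)).trans
      (σ.lam_anti i (i + 1) hi (by omega) (by omega))
  have := hI.2 _ hmem _ hcell (Prod.le_def.mpr ⟨by omega, le_rfl⟩)
  rw [σ.mem_iff hI] at this
  exact this.2.2.2

lemma rfn_mono (hI : σ.IsIdeal I) {i k : ℕ} (h : i ≤ k) : σ.rfn I k ≤ σ.rfn I i := by
  induction k, h using Nat.le_induction with
  | base => exact le_rfl
  | succ n hn ih => exact (σ.rfn_succ_le hI n).trans ih

end SkewShape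

namespace SkewShape

variable (σ : SkewShape) {I : Finset (ℕ × ℕ)}

lemma mem_cells_iff' (i j : ℕ) :
    ((i, j) : ℕ × ℕ) ∈ σ.cells ↔ 1 ≤ i ∧ i ≤ σ.a ∧ σ.nu i < j ∧ j ≤ σ.lam i :=
  σ.mem_cells_iff (i, j)

lemma mem_iff' (hI : σ.IsIdeal I) (i j : ℕ) :
    ((i, j) : ℕ × ℕ) ∈ I ↔ 1 ≤ i ∧ i ≤ σ.a ∧ σ.nu i < j ∧ j ≤ σ.rfn I i :=
  σ.mem_iff hI (i, j)

end SkewShape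
namespace SkewShape

variable (σ : SkewShape) {I : Finset (ℕ × ℕ)}

lemma canToggleOut_collapse (hI : σ.IsIdeal I) (p : ℕ × ℕ) :
    (p ∈ σ.cells ∧ σ.CanToggleOut I p) ↔
      (p.1 ∈ Finset.Icc 1 σ.a ∧
        (σ.rfn I (p.1 + 1) < σ.rfn I p.1 ∧ σ.nu p.1 < σ.rfn I p.1) ∧
        p.2 = σ.rfn I p.1) := by
  obtain ⟨i, j⟩ := p
  simp only [Finset.mem_Icc]
  constructor
  · rintro ⟨hp, hpI, hid⟩
    rw [σ.mem_cells_iff'] at hp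
    obtain ⟨h1, h2, h3, h4⟩ := hp
    have hjle : j ≤ σ.rfn I i := ((σ.mem_iff' hI i j).mp hpI).2.2.2
    have hjR : j = σ.rfn I i := by
      by_contra hne
      have hmem : ((i, σ.rfn I i) : ℕ × ℕ) ∈ I.erase (i, j) := by
        refine Finset.mem_erase.mpr ⟨?_, (σ.mem_iff' hI i _).mpr ⟨h1, h2, by omega, le_rfl⟩⟩
        simp only [ne_eq, Prod.mk.injEq, not_and]
        intro _
        omega
      have := hid.2 _ hmem (i, j) ((σ.mem_cells_iff' i j).mpr ⟨h1, h2, h3, h4⟩)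
        (Prod.le_def.mpr ⟨le_rfl, by omega⟩)
      exact absurd rfl (Finset.mem_erase.mp this).1
    have hlt : σ.rfn I (i + 1) < j := by
      by_contra hge
      push_neg at hge
      have hia : i < σ.a := by
        by_contra hia
        rw [σ.rfn_of_gt I (by omega)] at hge
        omega
      have hnu := σ.nu_anti i (i + 1) h1 (by omega) (by omega)
      have hmem : ((i + 1, j) : ℕ × ℕ) ∈ I.erase (i, j) := by
        refine Finset.mem_erase.mpr ⟨?_, (σ.mem_iff' hI (i + 1) j).mpr
          ⟨by omega, by omega, by omega, hge⟩⟩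
        simp only [ne_eq, Prod.mk.injEq, not_and]
        intro h
        omega
      have := hid.2 _ hmem (i, j) ((σ.mem_cells_iff' i j).mpr ⟨h1, h2, h3, h4⟩)
        (Prod.le_def.mpr ⟨by omega, le_rfl⟩)
      exact absurd rfl (Finset.mem_erase.mp this).1
    exact ⟨⟨h1, h2⟩, ⟨by omega, by omega⟩, hjR⟩
  · rintro ⟨⟨h1, h2⟩, ⟨hd, hnu⟩, rfl⟩
    have hcell : ((i, σ.rfn I i) : ℕ × ℕ) ∈ σ.cells :=
      (σ.mem_cells_iff' i _).mpr ⟨h1, h2, hnu, σ.rfn_le_lam hI h1 h2⟩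
    have hmemI : ((i, σ.rfn I i) : ℕ × ℕ) ∈ I :=
      (σ.mem_iff' hI i _).mpr ⟨h1, h2, hnu, le_rfl⟩
    refine ⟨hcell, hmemI, (Finset.erase_subset _ _).trans hI.1, ?_⟩
    intro q hq r hr hle
    have hqI := Finset.mem_of_mem_erase hq
    have hrI := hI.2 q hqI r hr hle
    refine Finset.mem_erase.mpr ⟨?_, hrI⟩
    intro hreq
    have hr1 : r.1 = i := by rw [hreq]
    have hr2 : r.2 = σ.rfn I i := by rw [hreq]
    obtain ⟨hle1, hle2⟩ := Prod.le_def.mp hle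
    have hq' := (σ.mem_iff hI q).mp hqI
    rcases eq_or_lt_of_le (show i ≤ q.1 by omega) with heq | hlt2
    · have hRq : σ.rfn I q.1 = σ.rfn I i := by rw [← heq]
      have hq2 : q.2 = σ.rfn I i := by omega
      have hqe : q = (i, σ.rfn I i) := Prod.ext_iff.mpr ⟨heq.symm, hq2⟩
      rw [hqe] at hq
      exact absurd rfl (Finset.mem_erase.mp hq).1
    · have hmono := σ.rfn_mono hI (show i + 1 ≤ q.1 from hlt2)
      omega

lemma canToggleIn_collapse (hI : σ.IsIdeal I) (p : ℕ × ℕ) :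
    (p ∈ σ.cells ∧ σ.CanToggleIn I p) ↔
      (p.1 ∈ Finset.Icc 1 σ.a ∧
        (σ.rfn I p.1 < σ.rfn I (p.1 - 1) ∧ σ.rfn I p.1 < σ.lam p.1) ∧
        p.2 = σ.rfn I p.1 + 1) := by
  obtain ⟨i, j⟩ := p
  simp only [Finset.mem_Icc]
  constructor
  · rintro ⟨hp, -, hpnI, hins⟩
    rw [σ.mem_cells_iff'] at hp
    obtain ⟨h1, h2, h3, h4⟩ := hp
    have hjgt : σ.rfn I i < j := by
      by_contra hle
      exact hpnI ((σ.mem_iff' hI i j).mpr ⟨h1, h2, h3, by omega⟩)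
    have hnuR := σ.nu_le_rfn I h1 h2
    have hj : j = σ.rfn I i + 1 := by
      by_contra hne
      have hcell : ((i, σ.rfn I i + 1) : ℕ × ℕ) ∈ σ.cells :=
        (σ.mem_cells_iff' i _).mpr ⟨h1, h2, by omega, by omega⟩
      have := hins.2 (i, j) (Finset.mem_insert_self _ _) _ hcell
        (Prod.le_def.mpr ⟨le_rfl, by omega⟩)
      rcases Finset.mem_insert.mp this with heq | hmem
      · rw [Prod.mk.injEq] at heq
        omega
      · have := ((σ.mem_iff' hI i _).mp hmem).2.2.2
        omega
    refine ⟨⟨h1, h2⟩, ⟨?_, by omega⟩, hj⟩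
    rcases Nat.eq_or_lt_of_le h1 with rfl | h1'
    · rw [show (1:ℕ) - 1 = 0 from rfl, σ.rfn_zero]
      have hl1 : σ.lam 1 = σ.b := σ.lam_one
      omega
    · by_contra hge
      push_neg at hge
      have hnu' := σ.nu_le_rfn I (show 1 ≤ i - 1 by omega) (by omega)
      have hlam' := σ.lam_anti (i - 1) i (by omega) (by omega) h2
      have hcell : ((i - 1, j) : ℕ × ℕ) ∈ σ.cells :=
        (σ.mem_cells_iff' (i - 1) j).mpr ⟨by omega, by omega, by omega, by omega⟩
      have := hins.2 (i, j) (Finset.mem_insert_self _ _) _ hcell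
        (Prod.le_def.mpr ⟨by omega, le_rfl⟩)
      rcases Finset.mem_insert.mp this with heq | hmem
      · rw [Prod.mk.injEq] at heq
        omega
      · have := ((σ.mem_iff' hI (i - 1) j).mp hmem).2.2.2
        omega
  · rintro ⟨⟨h1, h2⟩, ⟨hd, hlam⟩, rfl⟩
    have hnuR := σ.nu_le_rfn I h1 h2
    have hcell : ((i, σ.rfn I i + 1) : ℕ × ℕ) ∈ σ.cells :=
      (σ.mem_cells_iff' i _).mpr ⟨h1, h2, by omega, by omega⟩
    refine ⟨hcell, hcell, ?_, ?_, ?_⟩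
    · intro hmem
      have := ((σ.mem_iff' hI i _).mp hmem).2.2.2
      omega
    · exact Finset.insert_subset hcell hI.1
    · intro q hq r hr hle
      rcases Finset.mem_insert.mp hq with rfl | hqI
      · obtain ⟨hle1, hle2⟩ := Prod.le_def.mp hle
        have hle1' : r.1 ≤ i := by omega
        have hle2' : r.2 ≤ σ.rfn I i + 1 := by omega
        have hrc := (σ.mem_cells_iff r).mp hr
        rcases le_or_gt r.2 (σ.rfn I i) with hr2 | hr2
        · exact Finset.mem_insert_of_mem ((σ.mem_iff hI r).mpr
            ⟨hrc.1, hrc.2.1, hrc.2.2.1, hr2.trans (σ.rfn_mono hI hle1')⟩)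
        · have hr2' : r.2 = σ.rfn I i + 1 := by omega
          rcases eq_or_lt_of_le hle1' with heq | hlt
          · have : r = (i, σ.rfn I i + 1) := Prod.ext_iff.mpr ⟨heq, hr2'⟩
            rw [this]
            exact Finset.mem_insert_self _ _
          · have hmono := σ.rfn_mono hI (show r.1 ≤ i - 1 by omega)
            refine Finset.mem_insert_of_mem ((σ.mem_iff hI r).mpr
              ⟨hrc.1, hrc.2.1, hrc.2.2.1, by omega⟩)
      · exact Finset.mem_insert_of_mem (hI.2 q hqI r hr hle)

end SkewShape
namespace SkewShape

variable (σ : SkewShape) {I : Finset (ℕ × ℕ)}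

lemma conn_nu_le_lam (hc : σ.Connected) {i : ℕ} (h1 : 1 ≤ i) (h2 : i < σ.a) :
    σ.nu i ≤ σ.lam (i + 1) := by
  by_contra hcon
  push_neg at hcon
  have hpa : ((σ.a, 1) : ℕ × ℕ) ∈ σ.cells := by
    rw [σ.mem_cells_iff']
    have := σ.nu_lt_lam σ.a σ.ha le_rfl
    have := σ.nu_a
    exact ⟨σ.ha, le_rfl, by omega, by omega⟩
  have hqb : ((1, σ.b) : ℕ × ℕ) ∈ σ.cells := by
    rw [σ.mem_cells_iff']
    have := σ.nu_lt_lam 1 le_rfl σ.ha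
    have := σ.lam_one
    exact ⟨le_rfl, σ.ha, by omega, by omega⟩
  have key : ∀ x y : ℕ × ℕ, x ∈ σ.cells → y ∈ σ.cells → (x ≤ y ∨ y ≤ x) →
      (i < x.1 ↔ i < y.1) := by
    have half : ∀ x y : ℕ × ℕ, x ∈ σ.cells → y ∈ σ.cells → x ≤ y →
        (i < x.1 ↔ i < y.1) := by
      intro x y hx hy hxy
      rw [σ.mem_cells_iff] at hx hy
      obtain ⟨hxy1, hxy2⟩ := Prod.le_def.mp hxy
      constructor
      · intro h; omega
      · intro h
        by_contra hx1
        push_neg at hx1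
        have hn : σ.nu i ≤ σ.nu x.1 := σ.nu_anti x.1 i hx.1 hx1 (by omega)
        have hl : σ.lam y.1 ≤ σ.lam (i + 1) := σ.lam_anti (i + 1) y.1 (by omega) h hy.2.1
        omega
    rintro x y hx hy (h | h)
    · exact half x y hx hy h
    · exact (half y x hy hx h).symm
  have hwalk := hc.2 _ hpa _ hqb
  have hres : ∀ z : ℕ × ℕ,
      Relation.ReflTransGen
        (fun x y : ℕ × ℕ => x ∈ σ.cells ∧ y ∈ σ.cells ∧ (x ≤ y ∨ y ≤ x)) (σ.a, 1) z →
      i < z.1 := by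
    intro z hz
    induction hz with
    | refl => exact h2
    | tail _ hstep ih =>
        exact (key _ _ hstep.1 hstep.2.1 hstep.2.2).mp ih
  have := hres _ hwalk
  omega

lemma nwInPath_collapse (hI : σ.IsIdeal I) (hc : σ.Connected) (c : ℕ × ℕ) :
    (c ∈ σ.nwCorners ∧ NWInPath c I) ↔
      (c.1 ∈ Finset.Icc 1 σ.a ∧
        (c.1 < σ.a ∧ σ.rfn I c.1 = σ.nu c.1 ∧ σ.rfn I (c.1 + 1) < σ.nu c.1) ∧
        c.2 = σ.nu c.1) := by
  obtain ⟨i, j⟩ := c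
  unfold nwCorners
  simp only [Finset.mem_filter, Finset.mem_product, Finset.mem_range, Finset.mem_Icc]
  constructor
  · rintro ⟨⟨-, hcor⟩, hp1, hp2⟩
    obtain ⟨hc1, hc2, hc3⟩ := hcor
    dsimp only at hc1 hc2 hc3 hp1 hp2
    rw [σ.mem_cells_iff'] at hc1 hc2
    rw [σ.mem_cells_iff'] at hc3
    have hj : j = σ.nu i := by omega
    have hnuR := σ.nu_le_rfn I hc2.1 hc2.2.1
    have hR1 : σ.rfn I (i + 1) < j := by
      by_contra hge
      push_neg at hge
      exact hp1 ((σ.mem_iff' hI (i + 1) j).mpr ⟨by omega, by omega, hc1.2.2.1, hge⟩)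
    have hR0 : σ.rfn I i = σ.nu i := by
      by_contra hne
      exact hp2 ((σ.mem_iff' hI i (j + 1)).mpr ⟨hc2.1, hc2.2.1, by omega, by omega⟩)
    exact ⟨⟨hc2.1, hc2.2.1⟩, ⟨by omega, hR0, by omega⟩, hj⟩
  · rintro ⟨⟨h1, h2⟩, ⟨hia, hR0, hR1⟩, rfl⟩
    have hnuR1 := σ.nu_le_rfn I (show 1 ≤ i + 1 by omega) (by omega)
    have hnl := σ.nu_lt_lam i h1 h2
    have hconn := σ.conn_nu_le_lam hc h1 hia
    have hnub : σ.nu i ≤ σ.b := le_of_lt (lt_of_lt_of_le hnl (σ.lam_le_b i h1 h2))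
    refine ⟨⟨⟨by omega, by omega⟩, ?_, ?_, ?_⟩, ?_, ?_⟩
    · exact (σ.mem_cells_iff' (i + 1) (σ.nu i)).mpr ⟨by omega, by omega, by omega, hconn⟩
    · exact (σ.mem_cells_iff' i (σ.nu i + 1)).mpr ⟨h1, h2, by omega, by omega⟩
    · show ((i, σ.nu i) : ℕ × ℕ) ∉ σ.cells
      rw [σ.mem_cells_iff']
      omega
    · intro hmem
      have := ((σ.mem_iff' hI (i + 1) (σ.nu i)).mp hmem).2.2.2
      omega
    · intro hmem
      have := ((σ.mem_iff' hI i (σ.nu i + 1)).mp hmem).2.2.2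
      omega

lemma seInPath_collapse (hI : σ.IsIdeal I) (hc : σ.Connected) (c : ℕ × ℕ) :
    (c ∈ σ.seCorners ∧ SEInPath c I) ↔
      (c.1 ∈ Finset.Icc 1 σ.a ∧
        (c.1 < σ.a ∧ σ.rfn I (c.1 + 1) = σ.lam (c.1 + 1) ∧ σ.lam (c.1 + 1) < σ.rfn I c.1) ∧
        c.2 = σ.lam (c.1 + 1)) := by
  obtain ⟨i, j⟩ := c
  unfold seCorners
  simp only [Finset.mem_filter, Finset.mem_product, Finset.mem_range, Finset.mem_Icc]
  constructor
  · rintro ⟨⟨-, hcor⟩, hp1, hp2⟩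
    obtain ⟨hc1, hc2, hc3⟩ := hcor
    dsimp only at hc1 hc2 hc3 hp1 hp2
    rw [σ.mem_cells_iff'] at hc1 hc2
    rw [σ.mem_cells_iff'] at hc3
    have hj : j = σ.lam (i + 1) := by omega
    have hR1 : σ.rfn I (i + 1) = σ.lam (i + 1) := by
      have hle := σ.rfn_le_lam hI (show 1 ≤ i + 1 by omega) hc1.2.1
      have := ((σ.mem_iff' hI (i + 1) j).mp hp1).2.2.2
      omega
    have hR0 : σ.lam (i + 1) < σ.rfn I i := by
      have := ((σ.mem_iff' hI i (j + 1)).mp hp2).2.2.2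
      omega
    exact ⟨⟨hc2.1, hc2.2.1⟩, ⟨by omega, hR1, hR0⟩, hj⟩
  · rintro ⟨⟨h1, h2⟩, ⟨hia, hR1, hR0⟩, rfl⟩
    have hnl := σ.nu_lt_lam (i + 1) (by omega) (by omega)
    have hconn := σ.conn_nu_le_lam hc h1 hia
    have hlamb := σ.lam_le_b (i + 1) (by omega) (by omega)
    have hRlam := σ.rfn_le_lam hI h1 h2
    refine ⟨⟨⟨by omega, by omega⟩, ?_, ?_, ?_⟩, ?_, ?_⟩
    · exact (σ.mem_cells_iff' (i + 1) (σ.lam (i + 1))).mpr ⟨by omega, by omega, hnl, le_rfl⟩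
    · exact (σ.mem_cells_iff' i (σ.lam (i + 1) + 1)).mpr ⟨h1, h2, by omega, by omega⟩
    · show ((i + 1, σ.lam (i + 1) + 1) : ℕ × ℕ) ∉ σ.cells
      rw [σ.mem_cells_iff']
      omega
    · exact (σ.mem_iff' hI (i + 1) (σ.lam (i + 1))).mpr ⟨by omega, by omega, hnl, le_of_eq hR1.symm⟩
    · exact (σ.mem_iff' hI i (σ.lam (i + 1) + 1)).mpr ⟨h1, h2, by omega, by omega⟩

end SkewShape
namespace SkewShape

variable (σ : SkewShape) {I : Finset (ℕ × ℕ)}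

lemma sum_collapse {F : Finset (ℕ × ℕ)} {P : ℕ × ℕ → Prop} [DecidablePred P] {D : Finset ℕ}
    {C : ℕ → Prop} [DecidablePred C] {j0 : ℕ → ℕ}
    (h : ∀ p : ℕ × ℕ, (p ∈ F ∧ P p) ↔ (p.1 ∈ D ∧ C p.1 ∧ p.2 = j0 p.1)) (f : ℕ × ℕ → ℝ) :
    ∑ p ∈ F.filter P, f p = ∑ i ∈ D, if C i then f (i, j0 i) else 0 := by
  have himg : F.filter P = (D.filter C).image (fun i => (i, j0 i)) := by
    ext p
    simp only [Finset.mem_filter, Finset.mem_image]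
    constructor
    · rintro ⟨h1, h2⟩
      obtain ⟨hD, hC, hj⟩ := (h p).mp ⟨h1, h2⟩
      exact ⟨p.1, ⟨hD, hC⟩, Prod.ext_iff.mpr ⟨rfl, hj.symm⟩⟩
    · rintro ⟨i, ⟨hD, hC⟩, rfl⟩
      exact (h _).mpr ⟨hD, hC, rfl⟩
  rw [himg, Finset.sum_image (fun x _ y _ hxy => (Prod.ext_iff.mp hxy).1),
    Finset.sum_filter]

lemma card_collapse {F : Finset (ℕ × ℕ)} {P : ℕ × ℕ → Prop} [DecidablePred P] {D : Finset ℕ}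
    {C : ℕ → Prop} [DecidablePred C] {j0 : ℕ → ℕ}
    (h : ∀ p : ℕ × ℕ, (p ∈ F ∧ P p) ↔ (p.1 ∈ D ∧ C p.1 ∧ p.2 = j0 p.1)) :
    ((F.filter P).card : ℝ) = ∑ i ∈ D, if C i then (1 : ℝ) else 0 := by
  rw [← sum_collapse h (fun _ => (1 : ℝ))]
  simp

/-- The sum over `i ∈ [1,a]` of a function of `i-1` equals the sum of the function,
provided the function vanishes at `0` and at `a`. -/
lemma sum_shift (F : ℕ → ℝ) (hF0 : F 0 = 0) (hFa : F σ.a = 0) :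
    ∑ i ∈ Finset.Icc 1 σ.a, F (i - 1) = ∑ i ∈ Finset.Icc 1 σ.a, F i := by
  rw [← Finset.Ico_add_one_right_eq_Icc, Finset.sum_Ico_eq_sum_range,
    Finset.sum_Ico_eq_sum_range]
  simp only [show σ.a + 1 - 1 = σ.a from rfl]
  have e1 := Finset.sum_range_succ F σ.a
  have e2 := Finset.sum_range_succ' F σ.a
  have e3 : ∀ k, F (1 + k) = F (k + 1) := fun k => by rw [Nat.add_comm]
  calc ∑ k ∈ Finset.range σ.a, F (1 + k - 1) = ∑ k ∈ Finset.range σ.a, F k := by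
        apply Finset.sum_congr rfl
        intro k _
        congr 1
        omega
    _ = ∑ k ∈ Finset.range σ.a, F (1 + k) := by
        rw [Finset.sum_congr rfl (fun k _ => e3 k)]
        linarith

lemma telescope_aux (F : ℕ → ℝ) :
    ∑ i ∈ Finset.Icc 1 σ.a, F i - ∑ i ∈ Finset.Icc 1 σ.a, F (i - 1)
      = F σ.a - F 0 := by
  rw [← Finset.Ico_add_one_right_eq_Icc, Finset.sum_Ico_eq_sum_range,
    Finset.sum_Ico_eq_sum_range]
  simp only [show σ.a + 1 - 1 = σ.a from rfl]
  have e1 := Finset.sum_range_succ F σ.a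
  have e2 := Finset.sum_range_succ' F σ.a
  have e4 : ∑ k ∈ Finset.range σ.a, F (1 + k - 1) = ∑ k ∈ Finset.range σ.a, F k := by
    apply Finset.sum_congr rfl
    intro k _
    congr 1
    omega
  have e5 : ∑ k ∈ Finset.range σ.a, F (1 + k) = ∑ k ∈ Finset.range σ.a, F (k + 1) :=
    Finset.sum_congr rfl (fun k _ => by rw [Nat.add_comm])
  rw [e4, e5]
  linarith

end SkewShape
namespace SkewShape

variable (σ : SkewShape) {I : Finset (ℕ × ℕ)}

/-- The "antidiagonal level" of a lattice point. -/
def gfun (p : ℕ × ℕ) : ℝ := (p.1 : ℝ) / (σ.a : ℝ) + (p.2 : ℝ) / (σ.b : ℝ)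

lemma rfn_a_pos_iff (hI : σ.IsIdeal I) : ((σ.a, 1) : ℕ × ℕ) ∈ I ↔ 0 < σ.rfn I σ.a := by
  rw [σ.mem_iff' hI]
  have h0 := σ.nu_a
  have h1 := σ.ha
  constructor
  · intro h; omega
  · intro h; exact ⟨h1, le_rfl, by omega, by omega⟩

lemma rfn_one_b_iff (hI : σ.IsIdeal I) : ((1, σ.b) : ℕ × ℕ) ∈ I ↔ ¬ σ.rfn I 1 < σ.b := by
  rw [σ.mem_iff' hI]
  have h0 := σ.lam_one
  have h1 := σ.nu_lt_lam 1 le_rfl σ.ha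
  have h2 := σ.rfn_le_lam hI le_rfl σ.ha
  have h3 := σ.ha
  constructor
  · intro h; omega
  · intro h; exact ⟨le_rfl, h3, by omega, by omega⟩

lemma seCond_zero_false (hI : σ.IsIdeal I) :
    ¬ (0 < σ.a ∧ σ.rfn I (0 + 1) = σ.lam (0 + 1) ∧ σ.lam (0 + 1) < σ.rfn I 0) := by
  have h0 := σ.lam_one
  have h1 := σ.rfn_zero I
  rintro ⟨-, -, h⟩
  simp only [Nat.zero_add] at h
  omega

/-- Per-ideal identity with constant weights. -/
lemma per_ideal_one (hI : σ.IsIdeal I) (hc : σ.Connected) :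
    ((σ.cells.filter fun p => σ.CanToggleOut I p).card : ℝ)
      + ((σ.nwCorners.filter fun c => NWInPath c I).card : ℝ)
      - ((σ.cells.filter fun p => σ.CanToggleIn I p).card : ℝ)
      - ((σ.seCorners.filter fun c => SEInPath c I).card : ℝ)
    = (if 0 < σ.rfn I σ.a then (1 : ℝ) else 0)
        - (if σ.rfn I 1 < σ.b then (1 : ℝ) else 0) := by
  have hcoll1 : ((σ.cells.filter fun p => σ.CanToggleOut I p).card : ℝ)
      = ∑ i ∈ Finset.Icc 1 σ.a,
        (if σ.rfn I (i + 1) < σ.rfn I i ∧ σ.nu i < σ.rfn I i then (1:ℝ) else 0) :=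
    card_collapse (σ.canToggleOut_collapse hI)
  have hcoll2 : ((σ.cells.filter fun p => σ.CanToggleIn I p).card : ℝ)
      = ∑ i ∈ Finset.Icc 1 σ.a,
        (if σ.rfn I i < σ.rfn I (i - 1) ∧ σ.rfn I i < σ.lam i then (1:ℝ) else 0) :=
    card_collapse (j0 := fun i => σ.rfn I i + 1) (σ.canToggleIn_collapse hI)
  have hcoll3 : ((σ.nwCorners.filter fun c => NWInPath c I).card : ℝ)
      = ∑ i ∈ Finset.Icc 1 σ.a,
        (if i < σ.a ∧ σ.rfn I i = σ.nu i ∧ σ.rfn I (i + 1) < σ.nu i then (1:ℝ) else 0) :=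
    card_collapse (σ.nwInPath_collapse hI hc)
  have hcoll4 : ((σ.seCorners.filter fun c => SEInPath c I).card : ℝ)
      = ∑ i ∈ Finset.Icc 1 σ.a,
        (if i < σ.a ∧ σ.rfn I (i + 1) = σ.lam (i + 1) ∧ σ.lam (i + 1) < σ.rfn I i
          then (1:ℝ) else 0) :=
    card_collapse (j0 := fun i => σ.lam (i + 1)) (σ.seInPath_collapse hI hc)
  rw [hcoll1, hcoll2, hcoll3, hcoll4]
  have hnu_a := σ.nu_a
  have hrfn_gt := σ.rfn_of_gt I (Nat.lt_succ_self σ.a)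
  -- combine out + nw into descents
  have hA : ∑ i ∈ Finset.Icc 1 σ.a,
        (if σ.rfn I (i + 1) < σ.rfn I i ∧ σ.nu i < σ.rfn I i then (1:ℝ) else 0)
      + ∑ i ∈ Finset.Icc 1 σ.a,
        (if i < σ.a ∧ σ.rfn I i = σ.nu i ∧ σ.rfn I (i + 1) < σ.nu i then (1:ℝ) else 0)
      = ∑ i ∈ Finset.Icc 1 σ.a, (if σ.rfn I (i + 1) < σ.rfn I i then (1:ℝ) else 0) := by
    rw [← Finset.sum_add_distrib]
    apply Finset.sum_congr rfl
    intro i hi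
    rw [Finset.mem_Icc] at hi
    have hnuR := σ.nu_le_rfn I hi.1 hi.2
    by_cases hd : σ.rfn I (i + 1) < σ.rfn I i
    · rw [if_pos hd]
      by_cases hnu : σ.nu i < σ.rfn I i
      · rw [if_pos ⟨hd, hnu⟩, if_neg (by rintro ⟨-, h2, -⟩; omega), add_zero]
      · have hia : i < σ.a := by
          rcases eq_or_lt_of_le hi.2 with rfl | h
          · omega
          · exact h
        rw [if_neg (by rintro ⟨-, h2⟩; omega), if_pos ⟨hia, by omega, by omega⟩, zero_add]
    · rw [if_neg hd, if_neg (by rintro ⟨h1, -⟩; omega), if_neg (by rintro ⟨-, -, h3⟩; omega),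
        add_zero]
  -- shift the se sum
  have hshift : ∑ i ∈ Finset.Icc 1 σ.a,
        (if i < σ.a ∧ σ.rfn I (i + 1) = σ.lam (i + 1) ∧ σ.lam (i + 1) < σ.rfn I i
          then (1:ℝ) else 0)
      = ∑ i ∈ Finset.Icc 1 σ.a,
        (if i - 1 < σ.a ∧ σ.rfn I (i - 1 + 1) = σ.lam (i - 1 + 1)
            ∧ σ.lam (i - 1 + 1) < σ.rfn I (i - 1) then (1:ℝ) else 0) := by
    exact (σ.sum_shift (fun i => if i < σ.a ∧ σ.rfn I (i + 1) = σ.lam (i + 1)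
        ∧ σ.lam (i + 1) < σ.rfn I i then (1:ℝ) else 0)
      (if_neg (σ.seCond_zero_false hI))
      (if_neg (by rintro ⟨h, -⟩; exact lt_irrefl _ h))).symm
  -- combine in + shifted se into codescents
  have hB : ∑ i ∈ Finset.Icc 1 σ.a,
        (if σ.rfn I i < σ.rfn I (i - 1) ∧ σ.rfn I i < σ.lam i then (1:ℝ) else 0)
      + ∑ i ∈ Finset.Icc 1 σ.a,
        (if i - 1 < σ.a ∧ σ.rfn I (i - 1 + 1) = σ.lam (i - 1 + 1)
            ∧ σ.lam (i - 1 + 1) < σ.rfn I (i - 1) then (1:ℝ) else 0)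
      = ∑ i ∈ Finset.Icc 1 σ.a, (if σ.rfn I i < σ.rfn I (i - 1) then (1:ℝ) else 0) := by
    rw [← Finset.sum_add_distrib]
    apply Finset.sum_congr rfl
    intro i hi
    rw [Finset.mem_Icc] at hi
    have he : i - 1 + 1 = i := by omega
    rw [he]
    have hRlam := σ.rfn_le_lam hI hi.1 hi.2
    by_cases hd : σ.rfn I i < σ.rfn I (i - 1)
    · rw [if_pos hd]
      by_cases hl : σ.rfn I i < σ.lam i
      · rw [if_pos ⟨hd, hl⟩, if_neg (by rintro ⟨-, h2, -⟩; omega), add_zero]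
      · rw [if_neg (by rintro ⟨-, h2⟩; omega), if_pos ⟨by omega, by omega, by omega⟩, zero_add]
    · rw [if_neg hd, if_neg (by rintro ⟨h1, -⟩; omega), if_neg (by rintro ⟨-, -, h3⟩; omega),
        add_zero]
  have htel : ∑ i ∈ Finset.Icc 1 σ.a, (if σ.rfn I (i + 1) < σ.rfn I i then (1:ℝ) else 0)
      - ∑ i ∈ Finset.Icc 1 σ.a,
          (if σ.rfn I (i - 1 + 1) < σ.rfn I (i - 1) then (1:ℝ) else 0)
      = (if σ.rfn I (σ.a + 1) < σ.rfn I σ.a then (1:ℝ) else 0)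
        - (if σ.rfn I (0 + 1) < σ.rfn I 0 then (1:ℝ) else 0) :=
    σ.telescope_aux (fun k => if σ.rfn I (k + 1) < σ.rfn I k then (1:ℝ) else 0)
  have hrw : ∑ i ∈ Finset.Icc 1 σ.a, (if σ.rfn I i < σ.rfn I (i - 1) then (1:ℝ) else 0)
      = ∑ i ∈ Finset.Icc 1 σ.a,
          (if σ.rfn I (i - 1 + 1) < σ.rfn I (i - 1) then (1:ℝ) else 0) := by
    apply Finset.sum_congr rfl
    intro i hi
    rw [Finset.mem_Icc] at hi
    have he : i - 1 + 1 = i := by omega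
    rw [he]
  have hfa : (if σ.rfn I (σ.a + 1) < σ.rfn I σ.a then (1:ℝ) else 0)
      = (if 0 < σ.rfn I σ.a then (1:ℝ) else 0) := by rw [hrfn_gt]
  have hf0 : (if σ.rfn I (0 + 1) < σ.rfn I 0 then (1:ℝ) else 0)
      = (if σ.rfn I 1 < σ.b then (1:ℝ) else 0) := by
    rw [σ.rfn_zero]
  linarith [hA, hshift, hB, htel, hrw, hfa, hf0]

end SkewShape
namespace SkewShape

variable (σ : SkewShape) {I : Finset (ℕ × ℕ)}

lemma telescope_aux2 (F G h : ℕ → ℝ) (hFG : ∀ k, k < σ.a → F k - G k = h k - h (k + 1)) :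
    ∑ i ∈ Finset.Icc 1 σ.a, F i - ∑ i ∈ Finset.Icc 1 σ.a, G (i - 1)
      = (h 0 - h σ.a) + F σ.a - F 0 := by
  rw [← Finset.Ico_add_one_right_eq_Icc, Finset.sum_Ico_eq_sum_range, Finset.sum_Ico_eq_sum_range]
  simp only [show σ.a + 1 - 1 = σ.a from rfl]
  have e4 : ∑ k ∈ Finset.range σ.a, G (1 + k - 1) = ∑ k ∈ Finset.range σ.a, G k := by
    apply Finset.sum_congr rfl
    intro k _
    congr 1
    omega
  have e5 : ∑ k ∈ Finset.range σ.a, F (1 + k) = ∑ k ∈ Finset.range σ.a, F (k + 1) :=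
    Finset.sum_congr rfl (fun k _ => by rw [Nat.add_comm])
  have e1 := Finset.sum_range_succ F σ.a
  have e2 := Finset.sum_range_succ' F σ.a
  have e6 : ∑ k ∈ Finset.range σ.a, (F k - G k) = ∑ k ∈ Finset.range σ.a, (h k - h (k + 1)) := by
    apply Finset.sum_congr rfl
    intro k hk
    exact hFG k (Finset.mem_range.mp hk)
  have e7 := Finset.sum_range_sub' h σ.a
  have e8 : ∑ k ∈ Finset.range σ.a, (F k - G k)
      = ∑ k ∈ Finset.range σ.a, F k - ∑ k ∈ Finset.range σ.a, G k :=
    Finset.sum_sub_distrib F G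
  rw [e4, e5]
  linarith

/-- Per-ideal identity with antidiagonal weights. -/
lemma per_ideal_two (hI : σ.IsIdeal I) (hc : σ.Connected) :
    (∑ p ∈ σ.cells.filter fun p => σ.CanToggleOut I p, σ.gfun p)
      + (∑ c ∈ σ.nwCorners.filter fun c => NWInPath c I, σ.gfun c)
      - (∑ p ∈ σ.cells.filter fun p => σ.CanToggleIn I p, σ.gfun p)
      + ((1 : ℝ) / (σ.a : ℝ) + 1 / (σ.b : ℝ))
          * ((σ.cells.filter fun p => σ.CanToggleIn I p).card : ℝ)
      - (∑ c ∈ σ.seCorners.filter fun c => SEInPath c I, σ.gfun c)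
    = 1 + (if 0 < σ.rfn I σ.a then (1 : ℝ) else 0)
        - (if σ.rfn I 1 < σ.b then (1 : ℝ) else 0) := by
  have ha0 : (σ.a : ℝ) ≠ 0 := Nat.cast_ne_zero.mpr (by have := σ.ha; omega)
  have hb0 : (σ.b : ℝ) ≠ 0 := Nat.cast_ne_zero.mpr (by have := σ.hb; omega)
  have hnu_a := σ.nu_a
  have hrfn_gt := σ.rfn_of_gt I (Nat.lt_succ_self σ.a)
  have hcoll1 : (∑ p ∈ σ.cells.filter fun p => σ.CanToggleOut I p, σ.gfun p)
      = ∑ i ∈ Finset.Icc 1 σ.a,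
        (if σ.rfn I (i + 1) < σ.rfn I i ∧ σ.nu i < σ.rfn I i
          then ((i : ℝ) / (σ.a : ℝ) + (σ.rfn I i : ℝ) / (σ.b : ℝ)) else 0) :=
    sum_collapse (σ.canToggleOut_collapse hI) σ.gfun
  have hcoll2 : (∑ p ∈ σ.cells.filter fun p => σ.CanToggleIn I p, σ.gfun p)
      = ∑ i ∈ Finset.Icc 1 σ.a,
        (if σ.rfn I i < σ.rfn I (i - 1) ∧ σ.rfn I i < σ.lam i
          then ((i : ℝ) / (σ.a : ℝ) + ((σ.rfn I i + 1 : ℕ) : ℝ) / (σ.b : ℝ)) else 0) :=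
    sum_collapse (j0 := fun i => σ.rfn I i + 1) (σ.canToggleIn_collapse hI) σ.gfun
  have hcoll3 : (∑ c ∈ σ.nwCorners.filter fun c => NWInPath c I, σ.gfun c)
      = ∑ i ∈ Finset.Icc 1 σ.a,
        (if i < σ.a ∧ σ.rfn I i = σ.nu i ∧ σ.rfn I (i + 1) < σ.nu i
          then ((i : ℝ) / (σ.a : ℝ) + (σ.nu i : ℝ) / (σ.b : ℝ)) else 0) :=
    sum_collapse (σ.nwInPath_collapse hI hc) σ.gfun
  have hcoll4 : (∑ c ∈ σ.seCorners.filter fun c => SEInPath c I, σ.gfun c)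
      = ∑ i ∈ Finset.Icc 1 σ.a,
        (if i < σ.a ∧ σ.rfn I (i + 1) = σ.lam (i + 1) ∧ σ.lam (i + 1) < σ.rfn I i
          then ((i : ℝ) / (σ.a : ℝ) + (σ.lam (i + 1) : ℝ) / (σ.b : ℝ)) else 0) :=
    sum_collapse (j0 := fun i => σ.lam (i + 1)) (σ.seInPath_collapse hI hc) σ.gfun
  have hcard : ((σ.cells.filter fun p => σ.CanToggleIn I p).card : ℝ)
      = ∑ i ∈ Finset.Icc 1 σ.a,
        (if σ.rfn I i < σ.rfn I (i - 1) ∧ σ.rfn I i < σ.lam i then (1 : ℝ) else 0) :=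
    card_collapse (j0 := fun i => σ.rfn I i + 1) (σ.canToggleIn_collapse hI)
  rw [hcoll1, hcoll2, hcoll3, hcoll4, hcard]
  -- fold the κ·card term into the in-sum
  have hκ : ((1 : ℝ) / (σ.a : ℝ) + 1 / (σ.b : ℝ))
        * ∑ i ∈ Finset.Icc 1 σ.a,
          (if σ.rfn I i < σ.rfn I (i - 1) ∧ σ.rfn I i < σ.lam i then (1 : ℝ) else 0)
      = ∑ i ∈ Finset.Icc 1 σ.a,
          (if σ.rfn I i < σ.rfn I (i - 1) ∧ σ.rfn I i < σ.lam i
            then ((1 : ℝ) / (σ.a : ℝ) + 1 / (σ.b : ℝ)) else 0) := by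
    rw [Finset.mul_sum]
    apply Finset.sum_congr rfl
    intro i _
    split <;> ring
  rw [hκ]
  have hmerge : ∑ i ∈ Finset.Icc 1 σ.a,
          (if σ.rfn I i < σ.rfn I (i - 1) ∧ σ.rfn I i < σ.lam i
            then ((i : ℝ) / (σ.a : ℝ) + ((σ.rfn I i + 1 : ℕ) : ℝ) / (σ.b : ℝ)) else 0)
      - ∑ i ∈ Finset.Icc 1 σ.a,
          (if σ.rfn I i < σ.rfn I (i - 1) ∧ σ.rfn I i < σ.lam i
            then ((1 : ℝ) / (σ.a : ℝ) + 1 / (σ.b : ℝ)) else 0)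
      = ∑ i ∈ Finset.Icc 1 σ.a,
          (if σ.rfn I i < σ.rfn I (i - 1) ∧ σ.rfn I i < σ.lam i
            then (((i : ℝ) - 1) / (σ.a : ℝ) + (σ.rfn I i : ℝ) / (σ.b : ℝ)) else 0) := by
    rw [← Finset.sum_sub_distrib]
    apply Finset.sum_congr rfl
    intro i _
    split
    · push_cast
      ring
    · ring
  -- combine out + nw into descents
  have hA : ∑ i ∈ Finset.Icc 1 σ.a,
        (if σ.rfn I (i + 1) < σ.rfn I i ∧ σ.nu i < σ.rfn I i
          then ((i : ℝ) / (σ.a : ℝ) + (σ.rfn I i : ℝ) / (σ.b : ℝ)) else 0)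
      + ∑ i ∈ Finset.Icc 1 σ.a,
        (if i < σ.a ∧ σ.rfn I i = σ.nu i ∧ σ.rfn I (i + 1) < σ.nu i
          then ((i : ℝ) / (σ.a : ℝ) + (σ.nu i : ℝ) / (σ.b : ℝ)) else 0)
      = ∑ i ∈ Finset.Icc 1 σ.a,
        (if σ.rfn I (i + 1) < σ.rfn I i
          then ((i : ℝ) / (σ.a : ℝ) + (σ.rfn I i : ℝ) / (σ.b : ℝ)) else 0) := by
    rw [← Finset.sum_add_distrib]
    apply Finset.sum_congr rfl
    intro i hi
    rw [Finset.mem_Icc] at hi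
    have hnuR := σ.nu_le_rfn I hi.1 hi.2
    by_cases hd : σ.rfn I (i + 1) < σ.rfn I i
    · rw [if_pos hd]
      by_cases hnu : σ.nu i < σ.rfn I i
      · rw [if_pos ⟨hd, hnu⟩, if_neg (by rintro ⟨-, h2, -⟩; omega), add_zero]
      · have hia : i < σ.a := by
          rcases eq_or_lt_of_le hi.2 with rfl | h
          · omega
          · exact h
        rw [if_neg (by rintro ⟨-, h2⟩; omega), if_pos ⟨hia, by omega, by omega⟩, zero_add,
          show σ.rfn I i = σ.nu i by omega]
    · rw [if_neg hd, if_neg (by rintro ⟨h1, -⟩; omega), if_neg (by rintro ⟨-, -, h3⟩; omega),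
        add_zero]
  -- shift the se sum
  have hshift : ∑ i ∈ Finset.Icc 1 σ.a,
        (if i < σ.a ∧ σ.rfn I (i + 1) = σ.lam (i + 1) ∧ σ.lam (i + 1) < σ.rfn I i
          then ((i : ℝ) / (σ.a : ℝ) + (σ.lam (i + 1) : ℝ) / (σ.b : ℝ)) else 0)
      = ∑ i ∈ Finset.Icc 1 σ.a,
        (if i - 1 < σ.a ∧ σ.rfn I (i - 1 + 1) = σ.lam (i - 1 + 1)
            ∧ σ.lam (i - 1 + 1) < σ.rfn I (i - 1)
          then (((i - 1 : ℕ) : ℝ) / (σ.a : ℝ) + (σ.lam (i - 1 + 1) : ℝ) / (σ.b : ℝ)) else 0) := by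
    exact (σ.sum_shift (fun i => if i < σ.a ∧ σ.rfn I (i + 1) = σ.lam (i + 1)
        ∧ σ.lam (i + 1) < σ.rfn I i
        then ((i : ℝ) / (σ.a : ℝ) + (σ.lam (i + 1) : ℝ) / (σ.b : ℝ)) else 0)
      (if_neg (σ.seCond_zero_false hI))
      (if_neg (by rintro ⟨h, -⟩; exact lt_irrefl _ h))).symm
  -- combine (in − κ) + shifted se into codescents
  have hB : ∑ i ∈ Finset.Icc 1 σ.a,
        (if σ.rfn I i < σ.rfn I (i - 1) ∧ σ.rfn I i < σ.lam i
          then (((i : ℝ) - 1) / (σ.a : ℝ) + (σ.rfn I i : ℝ) / (σ.b : ℝ)) else 0)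
      + ∑ i ∈ Finset.Icc 1 σ.a,
        (if i - 1 < σ.a ∧ σ.rfn I (i - 1 + 1) = σ.lam (i - 1 + 1)
            ∧ σ.lam (i - 1 + 1) < σ.rfn I (i - 1)
          then (((i - 1 : ℕ) : ℝ) / (σ.a : ℝ) + (σ.lam (i - 1 + 1) : ℝ) / (σ.b : ℝ)) else 0)
      = ∑ i ∈ Finset.Icc 1 σ.a,
        (if σ.rfn I i < σ.rfn I (i - 1)
          then (((i : ℝ) - 1) / (σ.a : ℝ) + (σ.rfn I i : ℝ) / (σ.b : ℝ)) else 0) := by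
    rw [← Finset.sum_add_distrib]
    apply Finset.sum_congr rfl
    intro i hi
    rw [Finset.mem_Icc] at hi
    have he : i - 1 + 1 = i := by omega
    rw [he]
    have hRlam := σ.rfn_le_lam hI hi.1 hi.2
    have hcast : ((i - 1 : ℕ) : ℝ) = (i : ℝ) - 1 := by
      rw [Nat.cast_sub hi.1]
      norm_num
    by_cases hd : σ.rfn I i < σ.rfn I (i - 1)
    · rw [if_pos hd]
      by_cases hl : σ.rfn I i < σ.lam i
      · rw [if_pos ⟨hd, hl⟩, if_neg (by rintro ⟨-, h2, -⟩; omega), add_zero]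
      · rw [if_neg (by rintro ⟨-, h2⟩; omega), if_pos ⟨by omega, by omega, by omega⟩, zero_add,
          hcast, show σ.lam i = σ.rfn I i by omega]
    · rw [if_neg hd, if_neg (by rintro ⟨h1, -⟩; omega), if_neg (by rintro ⟨-, -, h3⟩; omega),
        add_zero]
  -- rewrite the codescent sum as a shifted descent sum
  have hrw : ∑ i ∈ Finset.Icc 1 σ.a,
        (if σ.rfn I i < σ.rfn I (i - 1)
          then (((i : ℝ) - 1) / (σ.a : ℝ) + (σ.rfn I i : ℝ) / (σ.b : ℝ)) else 0)
      = ∑ i ∈ Finset.Icc 1 σ.a,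
        (if σ.rfn I (i - 1 + 1) < σ.rfn I (i - 1)
          then (((i - 1 : ℕ) : ℝ) / (σ.a : ℝ) + (σ.rfn I (i - 1 + 1) : ℝ) / (σ.b : ℝ)) else 0) := by
    apply Finset.sum_congr rfl
    intro i hi
    rw [Finset.mem_Icc] at hi
    have he : i - 1 + 1 = i := by omega
    have hcast : ((i - 1 : ℕ) : ℝ) = (i : ℝ) - 1 := by
      rw [Nat.cast_sub hi.1]
      norm_num
    rw [he, hcast]
  -- telescope
  have htel : ∑ i ∈ Finset.Icc 1 σ.a,
        (if σ.rfn I (i + 1) < σ.rfn I i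
          then ((i : ℝ) / (σ.a : ℝ) + (σ.rfn I i : ℝ) / (σ.b : ℝ)) else 0)
      - ∑ i ∈ Finset.Icc 1 σ.a,
        (if σ.rfn I (i - 1 + 1) < σ.rfn I (i - 1)
          then (((i - 1 : ℕ) : ℝ) / (σ.a : ℝ) + (σ.rfn I (i - 1 + 1) : ℝ) / (σ.b : ℝ)) else 0)
      = ((σ.rfn I 0 : ℝ) / (σ.b : ℝ) - (σ.rfn I σ.a : ℝ) / (σ.b : ℝ))
        + (if σ.rfn I (σ.a + 1) < σ.rfn I σ.a
            then ((σ.a : ℝ) / (σ.a : ℝ) + (σ.rfn I σ.a : ℝ) / (σ.b : ℝ)) else 0)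
        - (if σ.rfn I (0 + 1) < σ.rfn I 0
            then (((0 : ℕ) : ℝ) / (σ.a : ℝ) + (σ.rfn I 0 : ℝ) / (σ.b : ℝ)) else 0) := by
    refine σ.telescope_aux2
      (fun k => if σ.rfn I (k + 1) < σ.rfn I k
        then ((k : ℝ) / (σ.a : ℝ) + (σ.rfn I k : ℝ) / (σ.b : ℝ)) else 0)
      (fun k => if σ.rfn I (k + 1) < σ.rfn I k
        then ((k : ℝ) / (σ.a : ℝ) + (σ.rfn I (k + 1) : ℝ) / (σ.b : ℝ)) else 0)
      (fun k => (σ.rfn I k : ℝ) / (σ.b : ℝ)) ?_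
    intro k _
    by_cases hd : σ.rfn I (k + 1) < σ.rfn I k
    · rw [if_pos hd, if_pos hd]
      ring
    · rw [if_neg hd, if_neg hd]
      have : σ.rfn I (k + 1) = σ.rfn I k :=
        le_antisymm (σ.rfn_succ_le hI k) (not_lt.mp hd)
      rw [this]
      ring
  -- final bookkeeping
  have hra : (σ.a : ℝ) / (σ.a : ℝ) = 1 := div_self ha0
  have hrb : (σ.b : ℝ) / (σ.b : ℝ) = 1 := div_self hb0
  have hfa : (if σ.rfn I (σ.a + 1) < σ.rfn I σ.a
        then ((σ.a : ℝ) / (σ.a : ℝ) + (σ.rfn I σ.a : ℝ) / (σ.b : ℝ)) else 0)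
      = (if 0 < σ.rfn I σ.a
          then (1 + (σ.rfn I σ.a : ℝ) / (σ.b : ℝ)) else 0) := by
    rw [hrfn_gt, hra]
  have hf0 : (if σ.rfn I (0 + 1) < σ.rfn I 0
        then (((0 : ℕ) : ℝ) / (σ.a : ℝ) + (σ.rfn I 0 : ℝ) / (σ.b : ℝ)) else 0)
      = (if σ.rfn I 1 < σ.b then (1 : ℝ) else 0) := by
    rw [σ.rfn_zero, hrb]
    norm_num
  have hr0 : (σ.rfn I 0 : ℝ) / (σ.b : ℝ) = 1 := by rw [σ.rfn_zero, hrb]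
  by_cases h1 : 0 < σ.rfn I σ.a
  · rw [if_pos h1] at hfa ⊢
    linarith [hmerge, hA, hshift, hB, hrw, htel, hfa, hf0, hr0]
  · rw [if_neg h1] at hfa ⊢
    have hz : (σ.rfn I σ.a : ℝ) = 0 := by
      have : σ.rfn I σ.a = 0 := by omega
      rw [this, Nat.cast_zero]
    have hz' : (σ.rfn I σ.a : ℝ) / (σ.b : ℝ) = 0 := by
      rw [hz]
      exact zero_div _
    linarith [hmerge, hA, hshift, hB, hrw, htel, hfa, hf0, hr0, hz']

end SkewShape
namespace SkewShape

variable (σ : SkewShape)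

lemma mem_idealsFinset {I : Finset (ℕ × ℕ)} : I ∈ σ.idealsFinset ↔ σ.IsIdeal I := by
  unfold idealsFinset
  simp only [Finset.mem_filter, Finset.mem_powerset]
  exact ⟨fun h => h.2, fun h => ⟨h.1, h⟩⟩

lemma pr_nonneg (μ : Finset (ℕ × ℕ) → ℝ) (hμ : ∀ I, 0 ≤ μ I) (E : Finset (ℕ × ℕ) → Prop) :
    0 ≤ σ.pr μ E :=
  Finset.sum_nonneg fun I _ => hμ I

lemma swap_sum (μ : Finset (ℕ × ℕ) → ℝ) (F : Finset (ℕ × ℕ))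
    (Q : ℕ × ℕ → Finset (ℕ × ℕ) → Prop) (f : ℕ × ℕ → ℝ) :
    ∑ I ∈ σ.idealsFinset, μ I * ∑ p ∈ F.filter (fun p => Q p I), f p
      = ∑ p ∈ F, f p * σ.pr μ (fun I => Q p I) := by
  have step1 : ∀ I, μ I * ∑ p ∈ F.filter (fun p => Q p I), f p
      = ∑ p ∈ F, (if Q p I then μ I * f p else 0) := by
    intro I
    rw [Finset.mul_sum, Finset.sum_filter]
  calc ∑ I ∈ σ.idealsFinset, μ I * ∑ p ∈ F.filter (fun p => Q p I), f p
      = ∑ I ∈ σ.idealsFinset, ∑ p ∈ F, (if Q p I then μ I * f p else 0) :=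
        Finset.sum_congr rfl (fun I _ => step1 I)
    _ = ∑ p ∈ F, ∑ I ∈ σ.idealsFinset, (if Q p I then μ I * f p else 0) := Finset.sum_comm
    _ = ∑ p ∈ F, f p * σ.pr μ (fun I => Q p I) := by
        apply Finset.sum_congr rfl
        intro p _
        have hpr : σ.pr μ (fun I => Q p I)
            = ∑ I ∈ σ.idealsFinset, (if Q p I then μ I else 0) := by
          unfold pr
          rw [Finset.sum_filter]
        rw [hpr, Finset.mul_sum]
        apply Finset.sum_congr rfl
        intro I _
        split <;> ring

lemma swap_card (μ : Finset (ℕ × ℕ) → ℝ) (F : Finset (ℕ × ℕ))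
    (Q : ℕ × ℕ → Finset (ℕ × ℕ) → Prop) :
    ∑ I ∈ σ.idealsFinset, μ I * ((F.filter (fun p => Q p I)).card : ℝ)
      = ∑ p ∈ F, σ.pr μ (fun I => Q p I) := by
  calc ∑ I ∈ σ.idealsFinset, μ I * ((F.filter (fun p => Q p I)).card : ℝ)
      = ∑ I ∈ σ.idealsFinset, μ I * ∑ p ∈ F.filter (fun p => Q p I), (1 : ℝ) := by
        apply Finset.sum_congr rfl
        intro I _
        congr 1
        simp
    _ = ∑ p ∈ F, (1 : ℝ) * σ.pr μ (fun I => Q p I) := σ.swap_sum μ F Q (fun _ => 1)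
    _ = ∑ p ∈ F, σ.pr μ (fun I => Q p I) :=
        Finset.sum_congr rfl (fun p _ => one_mul _)

end SkewShape
set_option maxHeartbeats 2000000 in
/-- Corollary 3.11, first part: for an abundant skew shape `σ` with
height `a` and width `b`, the expected jaggedness of a subshape with respect to any
toggle-symmetric probability distribution on `J(σ)` is at least `2ab/(a+b)`. -/
theorem SkewShape.expected_jaggedness_abundant (σ : SkewShape) (hab : σ.Abundant)
    (μ : Finset (ℕ × ℕ) → ℝ) (hμ : σ.IsProbDist μ) (hts : σ.ToggleSymmetric μ) :
    2 * (σ.a : ℝ) * (σ.b : ℝ) / ((σ.a : ℝ) + (σ.b : ℝ)) ≤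
      σ.expect μ (fun I => (σ.jag I : ℝ)) := by
  obtain ⟨hconn, hnwpos, hsepos⟩ := hab
  have hideal : ∀ I ∈ σ.idealsFinset, σ.IsIdeal I := fun I hI => σ.mem_idealsFinset.mp hI
  -- interchange of summation for each of the eight statistics
  have hswO1 : ∑ I ∈ σ.idealsFinset,
        μ I * ((σ.cells.filter fun p => σ.CanToggleOut I p).card : ℝ)
      = ∑ p ∈ σ.cells, σ.pr μ (fun I => σ.CanToggleOut I p) :=
    σ.swap_card μ σ.cells (fun p I => σ.CanToggleOut I p)
  have hswI1 : ∑ I ∈ σ.idealsFinset,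
        μ I * ((σ.cells.filter fun p => σ.CanToggleIn I p).card : ℝ)
      = ∑ p ∈ σ.cells, σ.pr μ (fun I => σ.CanToggleIn I p) :=
    σ.swap_card μ σ.cells (fun p I => σ.CanToggleIn I p)
  have hswN1 : ∑ I ∈ σ.idealsFinset,
        μ I * ((σ.nwCorners.filter fun c => NWInPath c I).card : ℝ)
      = ∑ c ∈ σ.nwCorners, σ.pr μ (NWInPath c) :=
    σ.swap_card μ σ.nwCorners (fun c I => NWInPath c I)
  have hswS1 : ∑ I ∈ σ.idealsFinset,
        μ I * ((σ.seCorners.filter fun c => SEInPath c I).card : ℝ)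
      = ∑ c ∈ σ.seCorners, σ.pr μ (SEInPath c) :=
    σ.swap_card μ σ.seCorners (fun c I => SEInPath c I)
  have hswO2 : ∑ I ∈ σ.idealsFinset,
        μ I * ∑ p ∈ σ.cells.filter fun p => σ.CanToggleOut I p, σ.gfun p
      = ∑ p ∈ σ.cells, σ.gfun p * σ.pr μ (fun I => σ.CanToggleOut I p) :=
    σ.swap_sum μ σ.cells (fun p I => σ.CanToggleOut I p) σ.gfun
  have hswI2 : ∑ I ∈ σ.idealsFinset,
        μ I * ∑ p ∈ σ.cells.filter fun p => σ.CanToggleIn I p, σ.gfun p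
      = ∑ p ∈ σ.cells, σ.gfun p * σ.pr μ (fun I => σ.CanToggleIn I p) :=
    σ.swap_sum μ σ.cells (fun p I => σ.CanToggleIn I p) σ.gfun
  have hswN2 : ∑ I ∈ σ.idealsFinset,
        μ I * ∑ c ∈ σ.nwCorners.filter fun c => NWInPath c I, σ.gfun c
      = ∑ c ∈ σ.nwCorners, σ.gfun c * σ.pr μ (NWInPath c) :=
    σ.swap_sum μ σ.nwCorners (fun c I => NWInPath c I) σ.gfun
  have hswS2 : ∑ I ∈ σ.idealsFinset,
        μ I * ∑ c ∈ σ.seCorners.filter fun c => SEInPath c I, σ.gfun c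
      = ∑ c ∈ σ.seCorners, σ.gfun c * σ.pr μ (SEInPath c) :=
    σ.swap_sum μ σ.seCorners (fun c I => SEInPath c I) σ.gfun
  -- aggregated first identity
  have hper1 : ∑ I ∈ σ.idealsFinset,
        μ I * (((σ.cells.filter fun p => σ.CanToggleOut I p).card : ℝ)
          + ((σ.nwCorners.filter fun c => NWInPath c I).card : ℝ)
          - ((σ.cells.filter fun p => σ.CanToggleIn I p).card : ℝ)
          - ((σ.seCorners.filter fun c => SEInPath c I).card : ℝ))
      = ∑ I ∈ σ.idealsFinset,
        μ I * ((if 0 < σ.rfn I σ.a then (1 : ℝ) else 0)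
          - (if σ.rfn I 1 < σ.b then (1 : ℝ) else 0)) :=
    Finset.sum_congr rfl fun I hI => by rw [σ.per_ideal_one (hideal I hI) hconn]
  have hL1 : ∑ I ∈ σ.idealsFinset,
        μ I * ((σ.cells.filter fun p => σ.CanToggleOut I p).card : ℝ)
      + ∑ I ∈ σ.idealsFinset,
        μ I * ((σ.nwCorners.filter fun c => NWInPath c I).card : ℝ)
      - ∑ I ∈ σ.idealsFinset,
        μ I * ((σ.cells.filter fun p => σ.CanToggleIn I p).card : ℝ)
      - ∑ I ∈ σ.idealsFinset,
        μ I * ((σ.seCorners.filter fun c => SEInPath c I).card : ℝ)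
      = ∑ I ∈ σ.idealsFinset,
        μ I * (((σ.cells.filter fun p => σ.CanToggleOut I p).card : ℝ)
          + ((σ.nwCorners.filter fun c => NWInPath c I).card : ℝ)
          - ((σ.cells.filter fun p => σ.CanToggleIn I p).card : ℝ)
          - ((σ.seCorners.filter fun c => SEInPath c I).card : ℝ)) := by
    rw [← Finset.sum_add_distrib, ← Finset.sum_sub_distrib, ← Finset.sum_sub_distrib]
    exact Finset.sum_congr rfl fun I _ => by ring
  have hR1 : ∑ I ∈ σ.idealsFinset,
        μ I * ((if 0 < σ.rfn I σ.a then (1 : ℝ) else 0)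
          - (if σ.rfn I 1 < σ.b then (1 : ℝ) else 0))
      = ∑ I ∈ σ.idealsFinset, μ I * (if 0 < σ.rfn I σ.a then (1 : ℝ) else 0)
        - ∑ I ∈ σ.idealsFinset, μ I * (if σ.rfn I 1 < σ.b then (1 : ℝ) else 0) := by
    rw [← Finset.sum_sub_distrib]
    exact Finset.sum_congr rfl fun I _ => by ring
  -- aggregated second identity
  have hper2 : ∑ I ∈ σ.idealsFinset,
        μ I * ((∑ p ∈ σ.cells.filter fun p => σ.CanToggleOut I p, σ.gfun p)
          + (∑ c ∈ σ.nwCorners.filter fun c => NWInPath c I, σ.gfun c)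
          - (∑ p ∈ σ.cells.filter fun p => σ.CanToggleIn I p, σ.gfun p)
          + ((1 : ℝ) / (σ.a : ℝ) + 1 / (σ.b : ℝ))
              * ((σ.cells.filter fun p => σ.CanToggleIn I p).card : ℝ)
          - (∑ c ∈ σ.seCorners.filter fun c => SEInPath c I, σ.gfun c))
      = ∑ I ∈ σ.idealsFinset,
        μ I * (1 + (if 0 < σ.rfn I σ.a then (1 : ℝ) else 0)
          - (if σ.rfn I 1 < σ.b then (1 : ℝ) else 0)) :=
    Finset.sum_congr rfl fun I hI => by rw [σ.per_ideal_two (hideal I hI) hconn]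
  have hL2 : ∑ I ∈ σ.idealsFinset,
        μ I * ∑ p ∈ σ.cells.filter fun p => σ.CanToggleOut I p, σ.gfun p
      + ∑ I ∈ σ.idealsFinset,
        μ I * ∑ c ∈ σ.nwCorners.filter fun c => NWInPath c I, σ.gfun c
      - ∑ I ∈ σ.idealsFinset,
        μ I * ∑ p ∈ σ.cells.filter fun p => σ.CanToggleIn I p, σ.gfun p
      + ∑ I ∈ σ.idealsFinset,
        μ I * (((1 : ℝ) / (σ.a : ℝ) + 1 / (σ.b : ℝ))
          * ((σ.cells.filter fun p => σ.CanToggleIn I p).card : ℝ))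
      - ∑ I ∈ σ.idealsFinset,
        μ I * ∑ c ∈ σ.seCorners.filter fun c => SEInPath c I, σ.gfun c
      = ∑ I ∈ σ.idealsFinset,
        μ I * ((∑ p ∈ σ.cells.filter fun p => σ.CanToggleOut I p, σ.gfun p)
          + (∑ c ∈ σ.nwCorners.filter fun c => NWInPath c I, σ.gfun c)
          - (∑ p ∈ σ.cells.filter fun p => σ.CanToggleIn I p, σ.gfun p)
          + ((1 : ℝ) / (σ.a : ℝ) + 1 / (σ.b : ℝ))
              * ((σ.cells.filter fun p => σ.CanToggleIn I p).card : ℝ)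
          - (∑ c ∈ σ.seCorners.filter fun c => SEInPath c I, σ.gfun c)) := by
    rw [← Finset.sum_add_distrib, ← Finset.sum_sub_distrib, ← Finset.sum_add_distrib,
      ← Finset.sum_sub_distrib]
    exact Finset.sum_congr rfl fun I _ => by ring
  have hR2 : ∑ I ∈ σ.idealsFinset,
        μ I * (1 + (if 0 < σ.rfn I σ.a then (1 : ℝ) else 0)
          - (if σ.rfn I 1 < σ.b then (1 : ℝ) else 0))
      = ∑ I ∈ σ.idealsFinset, μ I
        + ∑ I ∈ σ.idealsFinset, μ I * (if 0 < σ.rfn I σ.a then (1 : ℝ) else 0)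
        - ∑ I ∈ σ.idealsFinset, μ I * (if σ.rfn I 1 < σ.b then (1 : ℝ) else 0) := by
    rw [← Finset.sum_add_distrib, ← Finset.sum_sub_distrib]
    exact Finset.sum_congr rfl fun I _ => by ring
  have hκ2 : ∑ I ∈ σ.idealsFinset,
        μ I * (((1 : ℝ) / (σ.a : ℝ) + 1 / (σ.b : ℝ))
          * ((σ.cells.filter fun p => σ.CanToggleIn I p).card : ℝ))
      = ((1 : ℝ) / (σ.a : ℝ) + 1 / (σ.b : ℝ))
        * ∑ I ∈ σ.idealsFinset,
            μ I * ((σ.cells.filter fun p => σ.CanToggleIn I p).card : ℝ) := by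
    rw [Finset.mul_sum]
    exact Finset.sum_congr rfl fun I _ => by ring
  -- toggle symmetry, aggregated
  have ht1 : ∑ p ∈ σ.cells, σ.pr μ (fun I => σ.CanToggleIn I p)
      = ∑ p ∈ σ.cells, σ.pr μ (fun I => σ.CanToggleOut I p) :=
    Finset.sum_congr rfl fun p hp => hts p hp
  have ht2 : ∑ p ∈ σ.cells, σ.gfun p * σ.pr μ (fun I => σ.CanToggleIn I p)
      = ∑ p ∈ σ.cells, σ.gfun p * σ.pr μ (fun I => σ.CanToggleOut I p) :=
    Finset.sum_congr rfl fun p hp => by rw [hts p hp]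
  have hswI1' : ((1 : ℝ) / (σ.a : ℝ) + 1 / (σ.b : ℝ))
        * ∑ I ∈ σ.idealsFinset,
            μ I * ((σ.cells.filter fun p => σ.CanToggleIn I p).card : ℝ)
      = ((1 : ℝ) / (σ.a : ℝ) + 1 / (σ.b : ℝ))
        * ∑ p ∈ σ.cells, σ.pr μ (fun I => σ.CanToggleIn I p) := by rw [hswI1]
  have ht1' : ((1 : ℝ) / (σ.a : ℝ) + 1 / (σ.b : ℝ))
        * ∑ p ∈ σ.cells, σ.pr μ (fun I => σ.CanToggleIn I p)
      = ((1 : ℝ) / (σ.a : ℝ) + 1 / (σ.b : ℝ))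
        * ∑ p ∈ σ.cells, σ.pr μ (fun I => σ.CanToggleOut I p) := by rw [ht1]
  -- the corner correction
  have hcorr : σ.cornerCorrection μ
      = (∑ c ∈ σ.nwCorners, σ.pr μ (NWInPath c)
          - ∑ c ∈ σ.nwCorners, σ.gfun c * σ.pr μ (NWInPath c))
        + (∑ c ∈ σ.seCorners, σ.gfun c * σ.pr μ (SEInPath c)
          - ∑ c ∈ σ.seCorners, σ.pr μ (SEInPath c)) := by
    unfold cornerCorrection
    rw [← Finset.sum_sub_distrib, ← Finset.sum_sub_distrib]
    congr 1
    · exact Finset.sum_congr rfl fun c _ => by unfold nwDisp gfun; ring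
    · exact Finset.sum_congr rfl fun c _ => by unfold seDisp gfun; ring
  have hcnn : 0 ≤ σ.cornerCorrection μ := by
    unfold cornerCorrection
    have h1 : 0 ≤ ∑ c ∈ σ.nwCorners, σ.nwDisp c * σ.pr μ (NWInPath c) :=
      Finset.sum_nonneg fun c hc => mul_nonneg (hnwpos c hc) (σ.pr_nonneg μ hμ.1 _)
    have h2 : 0 ≤ ∑ c ∈ σ.seCorners, σ.seDisp c * σ.pr μ (SEInPath c) :=
      Finset.sum_nonneg fun c hc => mul_nonneg (hsepos c hc) (σ.pr_nonneg μ hμ.1 _)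
    linarith
  -- the key identity: (1/a + 1/b) E[#toggle-in] = 1 + cornerCorrection
  have hkey : ((1 : ℝ) / (σ.a : ℝ) + 1 / (σ.b : ℝ))
        * ∑ p ∈ σ.cells, σ.pr μ (fun I => σ.CanToggleOut I p)
      = 1 + σ.cornerCorrection μ := by
    linarith [hper1, hL1, hR1, hper2, hL2, hR2, hκ2, hswO1, hswI1, hswN1, hswS1,
      hswO2, hswI2, hswN2, hswS2, ht1, ht2, hswI1', ht1', hcorr, hμ.2]
  -- expectation of jaggedness
  have hexp : σ.expect μ (fun I => (σ.jag I : ℝ))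
      = ∑ I ∈ σ.idealsFinset,
          μ I * ((σ.cells.filter fun p => σ.CanToggleIn I p).card : ℝ)
        + ∑ I ∈ σ.idealsFinset,
          μ I * ((σ.cells.filter fun p => σ.CanToggleOut I p).card : ℝ) := by
    unfold expect jag
    rw [← Finset.sum_add_distrib]
    exact Finset.sum_congr rfl fun I _ => by push_cast; ring
  -- conclude
  have haR : (0 : ℝ) < (σ.a : ℝ) := Nat.cast_pos.mpr σ.ha
  have hbR : (0 : ℝ) < (σ.b : ℝ) := Nat.cast_pos.mpr σ.hb
  have h6 : 1 ≤ ((1 : ℝ) / (σ.a : ℝ) + 1 / (σ.b : ℝ))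
      * ∑ p ∈ σ.cells, σ.pr μ (fun I => σ.CanToggleOut I p) := by
    rw [hkey]
    linarith [hcnn]
  have hinv : ((1 : ℝ) / (σ.a : ℝ) + 1 / (σ.b : ℝ))
      = ((σ.a : ℝ) + (σ.b : ℝ)) / ((σ.a : ℝ) * (σ.b : ℝ)) := by
    field_simp
    ring
  rw [hinv, div_mul_eq_mul_div] at h6
  have hkey2 : (σ.a : ℝ) * (σ.b : ℝ)
      ≤ ((σ.a : ℝ) + (σ.b : ℝ)) * ∑ p ∈ σ.cells, σ.pr μ (fun I => σ.CanToggleOut I p) :=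
    (one_le_div (by positivity)).mp h6
  rw [hexp, hswI1, hswO1, ht1, div_le_iff₀ (by positivity)]
  nlinarith [hkey2]
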